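/- Let $\ell > 1$, $\epsilon > 0$, $A \in \mathbb{R}$, $B \in (0,1)$ with $\frac{(A+1)_+}{\alpha} + \frac{1-B}{2} \leq \ell$. Define $H(x,v) = E(x,v)^\ell + \epsilon \frac{\langle x\rangle^A}{\langle v\rangle^B}(x\cdot v)$. Then there exist constants $c_1, c_2 > 0$ (depending on the parameters) such that for all sufficiently small $\epsilon > 0$, $c_1 E(x,v)^\ell \leq H(x,v) \leq c_2 E(x,v)^\ell$ for all $(x,v) \in \mathbb{R}^d \times \mathbb{R}^d$. -/

import Mathlib

set_option maxHeartbeats 1000000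


noncomputable section

theorem stmt4 {d : ℕ} (hd : 1 ≤ d) (α ℓ A B : ℝ) (hα : 1 < α) (hℓ : 1 < ℓ)
    (hB : B ∈ Set.Ioo (0 : ℝ) 1)
    (hparam : max (A + 1) 0 / α + (1 - B) / 2 ≤ ℓ)
    (E : EuclideanSpace ℝ (Fin d) → EuclideanSpace ℝ (Fin d) → ℝ)
    (hE : ∀ x v, E x v = ‖v‖ ^ 2 / 2 + (Real.sqrt (1 + ‖x‖ ^ 2)) ^ α / α) :
    ∃ c₁ > (0 : ℝ), ∃ c₂ > (0 : ℝ), ∃ ε₀ > (0 : ℝ), ∀ ε : ℝ, 0 < ε → ε ≤ ε₀ →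
      ∀ x v : EuclideanSpace ℝ (Fin d),
        c₁ * (E x v) ^ ℓ
            ≤ (E x v) ^ ℓ
              + ε * ((Real.sqrt (1 + ‖x‖ ^ 2)) ^ A / (Real.sqrt (1 + ‖v‖ ^ 2)) ^ B)
                * (inner ℝ x v : ℝ)
          ∧ (E x v) ^ ℓ
              + ε * ((Real.sqrt (1 + ‖x‖ ^ 2)) ^ A / (Real.sqrt (1 + ‖v‖ ^ 2)) ^ B)
                * (inner ℝ x v : ℝ)
            ≤ c₂ * (E x v) ^ ℓ := by
  obtain ⟨hB0, hB1⟩ := hB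
  have hα0 : (0:ℝ) < α := lt_trans one_pos hα
  set p := max (A + 1) 0 / α with hp
  set q := (1 - B) / 2 with hq
  have hp0 : 0 ≤ p := div_nonneg (le_max_right _ _) hα0.le
  have hq0 : 0 ≤ q := by rw [hq]; linarith
  set C := α ^ p * (α + 2) ^ q * α ^ (ℓ - p - q) with hC
  have hCpos : 0 < C := by
    have h1 : (0:ℝ) < α ^ p := Real.rpow_pos_of_pos hα0 _
    have h2 : (0:ℝ) < (α + 2) ^ q := Real.rpow_pos_of_pos (by linarith) _
    have h3 : (0:ℝ) < α ^ (ℓ - p - q) := Real.rpow_pos_of_pos hα0 _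
    positivity
  refine ⟨1/2, by norm_num, 3/2, by norm_num, 1/(2*C), by positivity, ?_⟩
  intro ε hε hεle x v
  set sx := Real.sqrt (1 + ‖x‖ ^ 2) with hsx
  set sv := Real.sqrt (1 + ‖v‖ ^ 2) with hsv
  have hsx1 : 1 ≤ sx := Real.one_le_sqrt.mpr (by nlinarith [sq_nonneg ‖x‖])
  have hsv1 : 1 ≤ sv := Real.one_le_sqrt.mpr (by nlinarith [sq_nonneg ‖v‖])
  have hsx0 : 0 < sx := by linarith
  have hsv0 : 0 < sv := by linarith
  have hsx2 : sx ^ (2:ℕ) = 1 + ‖x‖ ^ 2 := Real.sq_sqrt (by positivity)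
  have hsv2 : sv ^ (2:ℕ) = 1 + ‖v‖ ^ 2 := Real.sq_sqrt (by positivity)
  have hxle : ‖x‖ ≤ sx := by nlinarith [norm_nonneg x]
  have hvle : ‖v‖ ≤ sv := by nlinarith [norm_nonneg v]
  have hsxα1 : 1 ≤ sx ^ α := Real.one_le_rpow hsx1 hα0.le
  have hEv : E x v = ‖v‖ ^ 2 / 2 + sx ^ α / α := hE x v
  have hE1 : 1 / α ≤ E x v := by
    rw [hEv]
    have h1 : 1 / α ≤ sx ^ α / α := by gcongr
    have h2 : (0:ℝ) ≤ ‖v‖ ^ 2 / 2 := by positivity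
    linarith
  have hEpos : 0 < E x v := lt_of_lt_of_le (by positivity) hE1
  have hsxαE : sx ^ α ≤ α * E x v := by
    rw [hEv]
    have h2 : (0:ℝ) ≤ ‖v‖ ^ 2 / 2 := by positivity
    rw [mul_add, mul_div_cancel₀ _ hα0.ne']
    nlinarith
  have hsvE : sv ^ (2:ℕ) ≤ (α + 2) * E x v := by
    rw [hsv2, hEv]
    have hαE : 1 ≤ α * (‖v‖ ^ 2 / 2 + sx ^ α / α) := by
      rw [mul_add, mul_div_cancel₀ _ hα0.ne']
      nlinarith [norm_nonneg v]
    have h4 : (0:ℝ) ≤ sx ^ α / α := by positivity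
    nlinarith [sq_nonneg ‖v‖]
  -- bound on sx^(A+1)
  have hx_bound : sx ^ (A + 1) ≤ (α * E x v) ^ p := by
    have h1 : sx ^ (A + 1) ≤ sx ^ (max (A + 1) 0) :=
      Real.rpow_le_rpow_of_exponent_le hsx1 (le_max_left _ _)
    have h3 : (sx ^ α) ^ p ≤ (α * E x v) ^ p :=
      Real.rpow_le_rpow (by positivity) hsxαE hp0
    calc sx ^ (A + 1) ≤ sx ^ (max (A + 1) 0) := h1
      _ = (sx ^ α) ^ p := by
        rw [← Real.rpow_mul hsx0.le]
        congr 1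
        rw [mul_comm α, div_mul_cancel₀ _ hα0.ne']
      _ ≤ (α * E x v) ^ p := h3
  have hv_bound : sv ^ (1 - B) ≤ ((α + 2) * E x v) ^ q := by
    have h2 : sv ^ (1 - B) = ((sv : ℝ) ^ (2:ℕ)) ^ q := by
      rw [← Real.rpow_natCast sv 2, ← Real.rpow_mul hsv0.le]
      congr 1
      push_cast
      rw [hq]
      ring
    rw [h2]
    exact Real.rpow_le_rpow (by positivity) hsvE hq0
  have hEpq : E x v ^ (p + q) ≤ α ^ (ℓ - p - q) * E x v ^ ℓ := by
    have h1 : E x v ^ (p + q) = E x v ^ ℓ * E x v ^ (p + q - ℓ) := by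
      rw [← Real.rpow_add hEpos]; ring_nf
    have h2 : E x v ^ (p + q - ℓ) ≤ (1 / α) ^ (p + q - ℓ) :=
      Real.rpow_le_rpow_of_nonpos (by positivity) hE1 (by linarith)
    have h3 : ((1 : ℝ) / α) ^ (p + q - ℓ) = α ^ (ℓ - p - q) := by
      rw [one_div, ← Real.rpow_neg_one α, ← Real.rpow_mul hα0.le]
      ring_nf
    rw [h1]
    calc E x v ^ ℓ * E x v ^ (p + q - ℓ) ≤ E x v ^ ℓ * (1 / α) ^ (p + q - ℓ) := by
          apply mul_le_mul_of_nonneg_left h2 (Real.rpow_nonneg hEpos.le _)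
      _ = α ^ (ℓ - p - q) * E x v ^ ℓ := by rw [h3]; ring
  -- the key bound on the perturbation
  have key : |sx ^ A / sv ^ B * (inner ℝ x v : ℝ)| ≤ C * E x v ^ ℓ := by
    have hinner : |(inner ℝ x v : ℝ)| ≤ sx * sv := by
      calc |(inner ℝ x v : ℝ)| ≤ ‖x‖ * ‖v‖ := abs_real_inner_le_norm x v
        _ ≤ sx * sv := mul_le_mul hxle hvle (norm_nonneg v) hsx0.le
    have hfac : 0 ≤ sx ^ A / sv ^ B := by positivity
    rw [abs_mul, abs_of_nonneg hfac]
    calc sx ^ A / sv ^ B * |(inner ℝ x v : ℝ)|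
        ≤ sx ^ A / sv ^ B * (sx * sv) := by
          apply mul_le_mul_of_nonneg_left hinner hfac
      _ = sx ^ (A + 1) * sv ^ (1 - B) := by
          rw [Real.rpow_add hsx0, Real.rpow_sub hsv0, Real.rpow_one, Real.rpow_one]
          field_simp
      _ ≤ (α * E x v) ^ p * ((α + 2) * E x v) ^ q := by
          apply mul_le_mul hx_bound hv_bound (Real.rpow_nonneg hsv0.le _) (by positivity)
      _ = α ^ p * (α + 2) ^ q * E x v ^ (p + q) := by
          rw [Real.mul_rpow hα0.le hEpos.le, Real.mul_rpow (by linarith) hEpos.le,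
            Real.rpow_add hEpos]
          ring
      _ ≤ α ^ p * (α + 2) ^ q * (α ^ (ℓ - p - q) * E x v ^ ℓ) := by
          apply mul_le_mul_of_nonneg_left hEpq
          positivity
      _ = C * E x v ^ ℓ := by rw [hC]; ring
  have hpert : |ε * (sx ^ A / sv ^ B) * (inner ℝ x v : ℝ)| ≤ (1/2) * E x v ^ ℓ := by
    have : |ε * (sx ^ A / sv ^ B) * (inner ℝ x v : ℝ)|
        = ε * |sx ^ A / sv ^ B * (inner ℝ x v : ℝ)| := by
      rw [mul_assoc, abs_mul, abs_of_pos hε]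
    rw [this]
    calc ε * |sx ^ A / sv ^ B * (inner ℝ x v : ℝ)| ≤ ε * (C * E x v ^ ℓ) :=
          mul_le_mul_of_nonneg_left key hε.le
      _ ≤ (1 / (2 * C)) * (C * E x v ^ ℓ) := by
          apply mul_le_mul_of_nonneg_right hεle (by positivity)
      _ = (1/2) * E x v ^ ℓ := by field_simp
  obtain ⟨h1, h2⟩ := abs_le.mp hpert
  constructor <;> linarith
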